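/- The unitary U_T of Eq. (16) implements the transformation rules of Eq. (15): for every N-qubit unitary T and every i = 1,…,N, U_T (X_i ⊗ 1) U_T† = X_i ⊗ T X_i T†, U_T (Z_i ⊗ 1) U_T† = Z_i ⊗ 1, U_T (1 ⊗ X_i) U_T† = Z_i ⊗ T Z_i T†, and U_T (1 ⊗ Z_i) U_T† = 1 ⊗ T X_i T†, where the first tensor factor is the input register and the second the output register. -/

import Mathlib

open Matrix Complex
open scoped Kronecker Classical

noncomputable section

namespace QCA

/-- Computational-basis index set of an `N`-qubit register. -/
abbrev QIdx (N : ℕ) := Fin N → Fin 2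

/-- Operators (matrices) on an `N`-qubit register `(ℂ²)^{⊗N}`. -/
abbrev MatQ (N : ℕ) := Matrix (QIdx N) (QIdx N) ℂ

/-- Pauli X. -/
def Xg : Matrix (Fin 2) (Fin 2) ℂ := !![0, 1; 1, 0]

/-- Pauli Z. -/
def Zg : Matrix (Fin 2) (Fin 2) ℂ := !![1, 0; 0, -1]

/-- Pauli Y = i·X·Z. -/
def Yg : Matrix (Fin 2) (Fin 2) ℂ := Complex.I • (Xg * Zg)

/-- Hadamard gate. -/
def Hg : Matrix (Fin 2) (Fin 2) ℂ := (Real.sqrt 2 : ℂ)⁻¹ • !![1, 1; 1, -1]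

/-- Phase gate S = diag(1, i). -/
def Sg : Matrix (Fin 2) (Fin 2) ℂ := !![1, 0; 0, Complex.I]

/-- √X := H·S·H. -/
def sqrtXg : Matrix (Fin 2) (Fin 2) ℂ := Hg * Sg * Hg

/-- The ket |+⟩ = (|0⟩+|1⟩)/√2. -/
def ketPlus : Fin 2 → ℂ := fun _ => (Real.sqrt 2 : ℂ)⁻¹

/-- The bra ⟨+|. -/
def braPlus : Fin 2 → ℂ := fun a => star (ketPlus a)

/-- The product state |+⟩^{⊗ι}. -/
def ketPlusAll (ι : Type*) [Fintype ι] : (ι → Fin 2) → ℂ := fun s => ∏ i, ketPlus (s i)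

/-- Kronecker product of two vectors. -/
def kronVec {a b : Type*} (v : a → ℂ) (w : b → ℂ) : a × b → ℂ := fun p => v p.1 * w p.2

variable {ι : Type*} [Fintype ι] [DecidableEq ι]

/-- `op1 P i` acts as the one-qubit operator `P` on qubit `i` and as the identity elsewhere. -/
def op1 (P : Matrix (Fin 2) (Fin 2) ℂ) (i : ι) : Matrix (ι → Fin 2) (ι → Fin 2) ℂ :=
  fun s t => P (s i) (t i) * ∏ j ∈ Finset.univ.erase i, (if s j = t j then (1 : ℂ) else 0)

/-- Controlled-Z gate between qubits `i` and `j` (identity elsewhere). -/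
def cz2 (i j : ι) : Matrix (ι → Fin 2) (ι → Fin 2) ℂ :=
  Matrix.diagonal fun s => if s i = 1 ∧ s j = 1 then (-1 : ℂ) else 1

/-- The Z-rotation exp(iθ Z_i) on qubit `i`. -/
def rotZ (θ : ℝ) (i : ι) : Matrix (ι → Fin 2) (ι → Fin 2) ℂ :=
  NormedSpace.exp (((θ : ℂ) * Complex.I) • op1 Zg i)

/-- The layer ∏_{i=1}^{N} H_i of Hadamards on every site of a ring of `N` qubits. -/
def hadamardLayer (N : ℕ) : MatQ N := (List.ofFn fun i : Fin N => op1 Hg i).prod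

/-- The layer ∏_{i=1}^{N} CZ_{i,i+1} of controlled-Z gates on a ring of `N` qubits
(site indices mod `N`; the factors pairwise commute). -/
def czRing (N : ℕ) [NeZero N] : MatQ N := (List.ofFn fun i : Fin N => cz2 i (i + 1)).prod

/-- The layer ∏_{i=1}^{N} (√X)_i on a ring of `N` qubits. -/
def sqrtXLayer (N : ℕ) : MatQ N := (List.ofFn fun i : Fin N => op1 sqrtXg i).prod

/-- The cluster CQCA T_c = (∏ H_i)·(∏ CZ_{i,i+1}) on a ring of `N` qubits. -/
def Tc (N : ℕ) [NeZero N] : MatQ N := hadamardLayer N * czRing N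

/-- The periodic CQCA T̃_c = ∏ CZ_{i,i+1} on a ring of `N` qubits. -/
def Ttc (N : ℕ) [NeZero N] : MatQ N := czRing N

/-- The fractal CQCA T̂_c = (∏ H_i)·(∏ CZ_{i,i+1})·(∏ (√X)_i) on a ring of `N` qubits. -/
def Thc (N : ℕ) [NeZero N] : MatQ N := hadamardLayer N * czRing N * sqrtXLayer N

/-- Controlled-Z between input qubit `i` and output qubit `i` on a doubled register. -/
def czIO {N : ℕ} (i : Fin N) : Matrix (QIdx N × QIdx N) (QIdx N × QIdx N) ℂ :=
  Matrix.diagonal fun p => if p.1 i = 1 ∧ p.2 i = 1 then (-1 : ℂ) else 1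

/-- The unitary U_T = (1 ⊗ T)·(∏_i H_i^{(out)})·(∏_i CZ_{i,i}^{(in,out)}) of Eq. (16). -/
def UT {N : ℕ} (T : MatQ N) : Matrix (QIdx N × QIdx N) (QIdx N × QIdx N) ℂ :=
  ((1 : MatQ N) ⊗ₖ T) *
    (List.ofFn fun i : Fin N => (1 : MatQ N) ⊗ₖ op1 Hg i).prod *
    (List.ofFn fun i : Fin N => czIO i).prod

/-- Contraction of the input register with the product bra `⊗_i bra i`. -/
def contractIn {N : ℕ} (bra : Fin N → Fin 2 → ℂ) (v : QIdx N × QIdx N → ℂ) : QIdx N → ℂ :=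
  fun t => ∑ s : QIdx N, (∏ i, bra i (s i)) * v (s, t)

lemma diagonal_commute {α : Type*} [Fintype α] [DecidableEq α] (d e : α → ℂ) :
    Commute (Matrix.diagonal d) (Matrix.diagonal e) := by
  unfold Commute SemiconjBy
  have h : (fun i => d i * e i) = fun i => e i * d i := by funext x; ring
  rw [Matrix.diagonal_mul_diagonal, Matrix.diagonal_mul_diagonal, h]

lemma Zg_eq_diagonal : Zg = Matrix.diagonal ![1, -1] := by
  ext i j
  fin_cases i <;> fin_cases j <;> simp [Zg, Matrix.diagonal]

lemma op1_diagonal (d : Fin 2 → ℂ) (i : ι) :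
    op1 (Matrix.diagonal d) i = Matrix.diagonal (fun s => d (s i)) := by
  ext s t
  by_cases h : s = t
  · subst h
    simp [op1, Matrix.diagonal_apply_eq]
  · rw [Matrix.diagonal_apply_ne _ h]
    by_cases hi : s i = t i
    · obtain ⟨k, hk⟩ : ∃ k, s k ≠ t k := Function.ne_iff.mp h
      have hki : k ≠ i := by rintro rfl; exact hk hi
      have h0 : (if s k = t k then (1 : ℂ) else 0) = 0 := by simp [hk]
      unfold op1
      rw [Finset.prod_eq_zero (Finset.mem_erase.mpr ⟨hki, Finset.mem_univ k⟩) h0]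
      ring
    · unfold op1
      rw [Matrix.diagonal_apply_ne _ hi]
      ring

/-- The controlled-Z gate attached to an (undirected) edge `e`. -/
def czEdge {N : ℕ} (e : Sym2 (Fin N)) : MatQ N :=
  Matrix.diagonal fun s => if ∀ i ∈ e, s i = 1 then (-1 : ℂ) else 1

/-- The unitary ∏_{{i,j} ∈ E(G)} CZ_{i,j} preparing the graph state (the
factors pairwise commute, so the product over the edge set is well defined). -/
def graphUnitary {N : ℕ} (G : SimpleGraph (Fin N)) [DecidableRel G.Adj] : MatQ N :=
  G.edgeFinset.noncommProd czEdge (by intro a _ b _ _; exact diagonal_commute _ _)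

/-- The graph state |G⟩ = (∏_{{i,j} ∈ E(G)} CZ_{i,j}) |+⟩^{⊗N}. -/
def graphState {N : ℕ} (G : SimpleGraph (Fin N)) [DecidableRel G.Adj] : QIdx N → ℂ :=
  (graphUnitary G).mulVec (ketPlusAll (Fin N))

/-- The stabilizer generator K_v = X_v · ∏_{w ∈ N_G(v)} Z_w of the graph state
(the Z factors pairwise commute, so the product is well defined). -/
def stabGen {N : ℕ} (G : SimpleGraph (Fin N)) [DecidableRel G.Adj] (v : Fin N) : MatQ N :=
  op1 Xg v *
    (G.neighborFinset v).noncommProd (fun w => op1 Zg w)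
      (by
        intro a _ b _ _
        simp only [Function.onFun]
        rw [Zg_eq_diagonal, op1_diagonal, op1_diagonal]
        exact diagonal_commute _ _)


section Aux

/-! ### Auxiliary machinery: full tensor products of one-qubit operators -/

/-- Full tensor product `⊗_j f j` of one-qubit matrices. -/
def tens (f : ι → Matrix (Fin 2) (Fin 2) ℂ) : Matrix (ι → Fin 2) (ι → Fin 2) ℂ :=
  fun s t => ∏ j, f j (s j) (t j)

lemma tens_mul (f g : ι → Matrix (Fin 2) (Fin 2) ℂ) :
    tens f * tens g = tens (fun j => f j * g j) := by
  ext s t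
  rw [Matrix.mul_apply]
  show ∑ u : ι → Fin 2, (∏ j, f j (s j) (u j)) * ∏ j, g j (u j) (t j)
      = ∏ j, (f j * g j) (s j) (t j)
  simp_rw [Matrix.mul_apply, Finset.prod_univ_sum, Fintype.piFinset_univ,
    Finset.prod_mul_distrib]

lemma tens_one : tens (fun _ : ι => (1 : Matrix (Fin 2) (Fin 2) ℂ)) = 1 := by
  ext s t
  by_cases h : s = t
  · subst h; simp [tens, Matrix.one_apply]
  · obtain ⟨j, hj⟩ := Function.ne_iff.mp h
    rw [Matrix.one_apply_ne h]
    exact Finset.prod_eq_zero (Finset.mem_univ j) (by simp [Matrix.one_apply, hj])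

lemma tens_conjTranspose (f : ι → Matrix (Fin 2) (Fin 2) ℂ) :
    (tens f)ᴴ = tens (fun j => (f j)ᴴ) := by
  ext s t
  simp [tens, Matrix.conjTranspose_apply, star_prod]

lemma op1_eq_tens (P : Matrix (Fin 2) (Fin 2) ℂ) (i : ι) :
    op1 P i = tens (fun j => if j = i then P else 1) := by
  ext s t
  show P (s i) (t i) * ∏ j ∈ Finset.univ.erase i, (if s j = t j then (1 : ℂ) else 0)
      = ∏ j, (if j = i then P else 1) (s j) (t j)
  rw [← Finset.mul_prod_erase Finset.univ _ (Finset.mem_univ i), if_pos rfl]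
  congr 1
  refine Finset.prod_congr rfl fun j hj => ?_
  rw [if_neg (Finset.mem_erase.mp hj).1, Matrix.one_apply]

lemma prod_map_op1 (g : ι → Matrix (Fin 2) (Fin 2) ℂ) :
    ∀ l : List ι, l.Nodup →
      (l.map fun i => op1 (g i) i).prod = tens (fun j => if j ∈ l then g j else 1)
  | [], _ => by simpa using tens_one.symm
  | a :: l, h => by
    obtain ⟨ha, hl⟩ := List.nodup_cons.mp h
    rw [List.map_cons, List.prod_cons, prod_map_op1 g l hl, op1_eq_tens, tens_mul]
    refine congrArg tens (funext fun j => ?_)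
    by_cases hja : j = a
    · subst hja
      simp [ha]
    · by_cases hjl : j ∈ l <;> simp [hja, hjl]

lemma prod_ofFn_op1 {N : ℕ} (g : Fin N → Matrix (Fin 2) (Fin 2) ℂ) :
    (List.ofFn fun i => op1 (g i) i).prod = tens g := by
  rw [List.ofFn_eq_map, prod_map_op1 g _ (List.nodup_finRange N)]
  simp [List.mem_finRange]

lemma prod_map_one_kron {N : ℕ} (l : List (MatQ N)) :
    (l.map fun A => (1 : MatQ N) ⊗ₖ A).prod = (1 : MatQ N) ⊗ₖ l.prod := by
  induction l with
  | nil => simp [Matrix.one_kronecker_one]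
  | cons a l ih =>
    rw [List.map_cons, List.prod_cons, List.prod_cons, ih, ← Matrix.mul_kronecker_mul,
      one_mul]

lemma kron_conjTranspose {m n : Type*} (A : Matrix m m ℂ) (B : Matrix n n ℂ) :
    (A ⊗ₖ B)ᴴ = Aᴴ ⊗ₖ Bᴴ := by
  ext p q
  simp [Matrix.conjTranspose_apply, star_mul']

/-! ### Single-qubit gate identities -/

lemma sqrt2_inv_sq : ((Real.sqrt 2 : ℂ))⁻¹ * ((Real.sqrt 2 : ℂ))⁻¹ = 2⁻¹ := by
  have h : ((Real.sqrt 2 : ℝ) : ℂ) * ((Real.sqrt 2 : ℝ) : ℂ) = 2 := by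
    rw [← Complex.ofReal_mul, Real.mul_self_sqrt (by norm_num : (0:ℝ) ≤ 2)]
    norm_num
  rw [← mul_inv, h]

lemma Hg_mul_Hg : Hg * Hg = 1 := by
  rw [Hg, Matrix.smul_mul, Matrix.mul_smul, smul_smul, sqrt2_inv_sq]
  ext a b
  fin_cases a <;> fin_cases b <;>
    simp [Matrix.mul_apply, Fin.sum_univ_two, Matrix.one_apply] <;> norm_num

lemma Hg_Zg_Hg : Hg * Zg * Hg = Xg := by
  rw [Hg, Matrix.smul_mul, Matrix.mul_smul, Matrix.smul_mul, smul_smul, sqrt2_inv_sq]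
  ext a b
  fin_cases a <;> fin_cases b <;>
    simp [Matrix.mul_apply, Fin.sum_univ_two, Zg, Xg] <;> norm_num

lemma Hg_Xg_Hg : Hg * Xg * Hg = Zg := by
  rw [Hg, Matrix.smul_mul, Matrix.mul_smul, Matrix.smul_mul, smul_smul, sqrt2_inv_sq]
  ext a b
  fin_cases a <;> fin_cases b <;>
    simp [Matrix.mul_apply, Fin.sum_univ_two, Zg, Xg] <;> norm_num

lemma Hg_herm : Hgᴴ = Hg := by
  ext a b
  fin_cases a <;> fin_cases b <;>
    simp [Hg, Matrix.conjTranspose_apply, Complex.ext_iff]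

lemma Xg_diag_zero (a : Fin 2) : Xg a a = 0 := by
  fin_cases a <;> simp [Xg]

/-! ### The diagonal CZ layer -/

/-- Diagonal entries of the product of the `CZ_{i,i}` gates. -/
def dCfun {N : ℕ} : QIdx N × QIdx N → ℂ :=
  fun p => ∏ i, if p.1 i = 1 ∧ p.2 i = 1 then (-1 : ℂ) else 1

lemma prod_map_diagonal {β : Type*} [Fintype β] [DecidableEq β] (l : List (β → ℂ)) :
    (l.map fun d => Matrix.diagonal d).prod
      = Matrix.diagonal fun p => (l.map fun d => d p).prod := by
  induction l with
  | nil => simp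
  | cons a l ih =>
    rw [List.map_cons, List.prod_cons, ih, Matrix.diagonal_mul_diagonal]
    refine congrArg Matrix.diagonal (funext fun p => ?_)
    simp

lemma czProd_eq {N : ℕ} :
    (List.ofFn fun i : Fin N => czIO i).prod = Matrix.diagonal dCfun := by
  have h : (List.ofFn fun i : Fin N => czIO i)
      = (List.ofFn fun i : Fin N =>
          (fun p : QIdx N × QIdx N => if p.1 i = 1 ∧ p.2 i = 1 then (-1 : ℂ) else 1)).map
          fun d => Matrix.diagonal d := by
    rw [List.map_ofFn]; rfl
  rw [h, prod_map_diagonal]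
  refine congrArg Matrix.diagonal (funext fun p => ?_)
  rw [List.map_ofFn]
  exact List.prod_ofFn

lemma dC_mul_self {N : ℕ} (p : QIdx N × QIdx N) : dCfun p * dCfun p = 1 := by
  rw [dCfun, ← Finset.prod_mul_distrib]
  refine Finset.prod_eq_one fun j _ => ?_
  split_ifs <;> norm_num

lemma dC_star {N : ℕ} (p : QIdx N × QIdx N) : star (dCfun p) = dCfun p := by
  rw [dCfun, star_prod]
  refine Finset.prod_congr rfl fun j _ => ?_
  split_ifs <;> simp

lemma D_herm {N : ℕ} :
    (Matrix.diagonal (dCfun (N := N)))ᴴ = Matrix.diagonal (dCfun (N := N)) := by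
  rw [Matrix.diagonal_conjTranspose]
  refine congrArg Matrix.diagonal (funext fun p => ?_)
  simp only [Pi.star_apply]
  exact dC_star p

lemma op1Z_diag {N : ℕ} (i : Fin N) :
    op1 Zg i = Matrix.diagonal fun s : QIdx N => (![1, -1] : Fin 2 → ℂ) (s i) := by
  rw [Zg_eq_diagonal, op1_diagonal]

lemma D_conj_X_one {N : ℕ} (i : Fin N) :
    Matrix.diagonal dCfun * (op1 Xg i ⊗ₖ (1 : MatQ N)) * Matrix.diagonal dCfun
      = op1 Xg i ⊗ₖ op1 Zg i := by
  ext p q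
  obtain ⟨s1, s2⟩ := p
  obtain ⟨t1, t2⟩ := q
  rw [Matrix.mul_diagonal, Matrix.diagonal_mul, Matrix.kroneckerMap_apply,
    Matrix.kroneckerMap_apply, op1Z_diag]
  by_cases h2 : s2 = t2
  · subst h2
    rw [Matrix.one_apply_eq, Matrix.diagonal_apply_eq, mul_one]
    by_cases hX : s1 i = t1 i
    · have h0 : op1 Xg i s1 t1 = 0 := by
        show Xg (s1 i) (t1 i) * _ = 0
        rw [hX, Xg_diag_zero, zero_mul]
      rw [h0]; ring
    · by_cases hrest : ∀ j ∈ Finset.univ.erase i, s1 j = t1 j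
      · have hC : dCfun (s1, s2) * dCfun (t1, s2) = (![1, -1] : Fin 2 → ℂ) (s2 i) := by
          show (∏ j, if s1 j = 1 ∧ s2 j = 1 then (-1:ℂ) else 1)
              * (∏ j, if t1 j = 1 ∧ s2 j = 1 then (-1:ℂ) else 1) = _
          rw [← Finset.prod_mul_distrib]
          rw [Finset.prod_eq_single i (fun j _ hj => ?side) (fun h => absurd (Finset.mem_univ i) h)]
          · revert hX
            generalize s1 i = a
            generalize t1 i = b
            generalize s2 i = c
            intro hX
            fin_cases a <;> fin_cases b <;> fin_cases c <;> simp_all <;> norm_num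
          case side =>
            rw [hrest j (Finset.mem_erase.mpr ⟨hj, Finset.mem_univ j⟩)]
            split_ifs <;> norm_num
        linear_combination op1 Xg i s1 t1 * hC
      · push_neg at hrest
        obtain ⟨j, hj, hne⟩ := hrest
        have h0 : op1 Xg i s1 t1 = 0 := by
          show Xg (s1 i) (t1 i) * _ = 0
          rw [Finset.prod_eq_zero hj (by simp [hne])]
          ring
        rw [h0]; ring
  · rw [Matrix.one_apply_ne h2, Matrix.diagonal_apply_ne _ h2]; ring

lemma D_conj_one_X {N : ℕ} (i : Fin N) :
    Matrix.diagonal dCfun * ((1 : MatQ N) ⊗ₖ op1 Xg i) * Matrix.diagonal dCfun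
      = op1 Zg i ⊗ₖ op1 Xg i := by
  ext p q
  obtain ⟨s1, s2⟩ := p
  obtain ⟨t1, t2⟩ := q
  rw [Matrix.mul_diagonal, Matrix.diagonal_mul, Matrix.kroneckerMap_apply,
    Matrix.kroneckerMap_apply, op1Z_diag]
  by_cases h1 : s1 = t1
  · subst h1
    rw [Matrix.one_apply_eq, Matrix.diagonal_apply_eq, one_mul]
    by_cases hX : s2 i = t2 i
    · have h0 : op1 Xg i s2 t2 = 0 := by
        show Xg (s2 i) (t2 i) * _ = 0
        rw [hX, Xg_diag_zero, zero_mul]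
      rw [h0]; ring
    · by_cases hrest : ∀ j ∈ Finset.univ.erase i, s2 j = t2 j
      · have hC : dCfun (s1, s2) * dCfun (s1, t2) = (![1, -1] : Fin 2 → ℂ) (s1 i) := by
          show (∏ j, if s1 j = 1 ∧ s2 j = 1 then (-1:ℂ) else 1)
              * (∏ j, if s1 j = 1 ∧ t2 j = 1 then (-1:ℂ) else 1) = _
          rw [← Finset.prod_mul_distrib]
          rw [Finset.prod_eq_single i (fun j _ hj => ?side) (fun h => absurd (Finset.mem_univ i) h)]
          · revert hX
            generalize s2 i = a
            generalize t2 i = b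
            generalize s1 i = c
            intro hX
            fin_cases a <;> fin_cases b <;> fin_cases c <;> simp_all <;> norm_num
          case side =>
            rw [hrest j (Finset.mem_erase.mpr ⟨hj, Finset.mem_univ j⟩)]
            split_ifs <;> norm_num
        linear_combination op1 Xg i s2 t2 * hC
      · push_neg at hrest
        obtain ⟨j, hj, hne⟩ := hrest
        have h0 : op1 Xg i s2 t2 = 0 := by
          show Xg (s2 i) (t2 i) * _ = 0
          rw [Finset.prod_eq_zero hj (by simp [hne])]
          ring
        rw [h0]; ring
  · rw [Matrix.one_apply_ne h1, Matrix.diagonal_apply_ne _ h1]; ring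

lemma D_conj_Z_one {N : ℕ} (i : Fin N) :
    Matrix.diagonal dCfun * (op1 Zg i ⊗ₖ (1 : MatQ N)) * Matrix.diagonal dCfun
      = op1 Zg i ⊗ₖ (1 : MatQ N) := by
  have h : op1 Zg i ⊗ₖ (1 : MatQ N)
      = Matrix.diagonal fun p : QIdx N × QIdx N => (![1, -1] : Fin 2 → ℂ) (p.1 i) := by
    rw [op1Z_diag, ← Matrix.diagonal_one (n := QIdx N), Matrix.diagonal_kronecker_diagonal]
    simp
  rw [h, Matrix.diagonal_mul_diagonal, Matrix.diagonal_mul_diagonal]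
  refine congrArg Matrix.diagonal (funext fun p => ?_)
  have := dC_mul_self p
  linear_combination (![1, -1] : Fin 2 → ℂ) (p.1 i) * this

lemma D_conj_one_Z {N : ℕ} (i : Fin N) :
    Matrix.diagonal dCfun * ((1 : MatQ N) ⊗ₖ op1 Zg i) * Matrix.diagonal dCfun
      = (1 : MatQ N) ⊗ₖ op1 Zg i := by
  have h : (1 : MatQ N) ⊗ₖ op1 Zg i
      = Matrix.diagonal fun p : QIdx N × QIdx N => (![1, -1] : Fin 2 → ℂ) (p.2 i) := by
    rw [op1Z_diag, ← Matrix.diagonal_one (n := QIdx N), Matrix.diagonal_kronecker_diagonal]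
    simp
  rw [h, Matrix.diagonal_mul_diagonal, Matrix.diagonal_mul_diagonal]
  refine congrArg Matrix.diagonal (funext fun p => ?_)
  have := dC_mul_self p
  linear_combination (![1, -1] : Fin 2 → ℂ) (p.2 i) * this

end Aux


/-- the unitary `U_T` of Eq. (16) implements the transformation rules of
Eq. (15) on the input and output registers. -/
theorem UT_conjugation {N : ℕ} (T : MatQ N)
    (hT : T ∈ Matrix.unitaryGroup (QIdx N) ℂ) (i : Fin N) :
    UT T * (op1 Xg i ⊗ₖ (1 : MatQ N)) * (UT T)ᴴ = op1 Xg i ⊗ₖ (T * op1 Xg i * Tᴴ) ∧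
    UT T * (op1 Zg i ⊗ₖ (1 : MatQ N)) * (UT T)ᴴ = op1 Zg i ⊗ₖ (1 : MatQ N) ∧
    UT T * ((1 : MatQ N) ⊗ₖ op1 Xg i) * (UT T)ᴴ = op1 Zg i ⊗ₖ (T * op1 Zg i * Tᴴ) ∧
    UT T * ((1 : MatQ N) ⊗ₖ op1 Zg i) * (UT T)ᴴ = (1 : MatQ N) ⊗ₖ (T * op1 Xg i * Tᴴ) := by
  have hTT : T * Tᴴ = 1 := by
    have h := (Unitary.mem_iff.mp hT).2
    rwa [Matrix.star_eq_conjTranspose] at h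
  set Hall : MatQ N := tens fun _ : Fin N => Hg with hHalldef
  have hHall_herm : Hallᴴ = Hall := by
    rw [hHalldef, tens_conjTranspose]
    simp only [Hg_herm]
  have hHH : Hall * Hall = 1 := by
    rw [hHalldef, tens_mul]
    simp only [Hg_mul_Hg]
    exact tens_one
  have hHZH : Hall * op1 Zg i * Hall = op1 Xg i := by
    rw [hHalldef, op1_eq_tens Zg i, tens_mul, tens_mul, op1_eq_tens Xg i]
    refine congrArg tens (funext fun j => ?_)
    by_cases h : j = i <;> simp [h, Hg_Zg_Hg, Hg_mul_Hg]
  have hHXH : Hall * op1 Xg i * Hall = op1 Zg i := by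
    rw [hHalldef, op1_eq_tens Xg i, tens_mul, tens_mul, op1_eq_tens Zg i]
    refine congrArg tens (funext fun j => ?_)
    by_cases h : j = i <;> simp [h, Hg_Xg_Hg, Hg_mul_Hg]
  have hU : UT T = ((1 : MatQ N) ⊗ₖ (T * Hall)) * Matrix.diagonal dCfun := by
    rw [UT, czProd_eq]
    have h1 : (List.ofFn fun i : Fin N => (1 : MatQ N) ⊗ₖ op1 Hg i)
        = (List.ofFn fun i : Fin N => op1 Hg i).map fun A => (1 : MatQ N) ⊗ₖ A := by
      rw [List.map_ofFn]; rfl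
    rw [h1, prod_map_one_kron, prod_ofFn_op1, ← hHalldef, ← Matrix.mul_kronecker_mul,
      one_mul]
  have hUH : (UT T)ᴴ = Matrix.diagonal dCfun * ((1 : MatQ N) ⊗ₖ (Hall * Tᴴ)) := by
    rw [hU, Matrix.conjTranspose_mul, D_herm, kron_conjTranspose, Matrix.conjTranspose_one,
      Matrix.conjTranspose_mul, hHall_herm]
  have main : ∀ (M : Matrix (QIdx N × QIdx N) (QIdx N × QIdx N) ℂ) (P Q : MatQ N),
      Matrix.diagonal dCfun * M * Matrix.diagonal dCfun = P ⊗ₖ Q →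
      UT T * M * (UT T)ᴴ = P ⊗ₖ (T * (Hall * Q * Hall) * Tᴴ) := by
    intro M P Q h
    rw [hUH, hU]
    calc ((1 : MatQ N) ⊗ₖ (T * Hall)) * Matrix.diagonal dCfun * M *
          (Matrix.diagonal dCfun * ((1 : MatQ N) ⊗ₖ (Hall * Tᴴ)))
        = ((1 : MatQ N) ⊗ₖ (T * Hall)) *
            (Matrix.diagonal dCfun * M * Matrix.diagonal dCfun) *
            ((1 : MatQ N) ⊗ₖ (Hall * Tᴴ)) := by
          simp only [Matrix.mul_assoc]
      _ = ((1 : MatQ N) ⊗ₖ (T * Hall)) * (P ⊗ₖ Q) * ((1 : MatQ N) ⊗ₖ (Hall * Tᴴ)) := by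
          rw [h]
      _ = ((1 * P) * 1) ⊗ₖ (((T * Hall) * Q) * (Hall * Tᴴ)) := by
          rw [← Matrix.mul_kronecker_mul, ← Matrix.mul_kronecker_mul]
      _ = P ⊗ₖ (T * (Hall * Q * Hall) * Tᴴ) := by
          rw [one_mul, mul_one]
          congr 1
          noncomm_ring
  refine ⟨?_, ?_, ?_, ?_⟩
  · have h := main _ _ _ (D_conj_X_one i)
    rwa [hHZH] at h
  · have h := main _ _ _ (D_conj_Z_one i)
    rwa [mul_one, hHH, mul_one, hTT] at h
  · have h := main _ _ _ (D_conj_one_X i)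
    rwa [hHXH] at h
  · have h := main _ _ _ (D_conj_one_Z i)
    rwa [hHZH] at h


end QCA

end
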